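/- Let K be an algebraically closed field of characteristic zero, let p ≥ 1 be an integer, and let ε ∈ K be a primitive p-th root of unity. Let s ≥ 0, k ≥ 2, n := k−1, and work in the ring A := MvPowerSeries (Fin (1+s+n)) K of formal power series in variables t, u₁,…,u_s, x₁,…,x_n; monomials are written t^β u^δ x^α with β ∈ ℕ, δ ∈ ℕ^s, α ∈ ℕⁿ. Say that F ∈ A is a series in t^p if every coefficient of F on a monomial t^β u^δ x^α with β not divisible by p is zero. Let b₁,…,b_k ∈ A satisfy: (i) each bᵢ has zero x-constant term (the coefficient of bᵢ on every monomial t^β u^δ x^0 vanishes); (ii) writing λᵢ ∈ (K⟦u₁,…,u_s⟧)ⁿ for the t-free x-linear part of bᵢ (λᵢⱼ is the power series in u whose coefficient on u^δ is the coefficient of bᵢ on the monomial t^0 u^δ x^{eⱼ}, where eⱼ ∈ ℕⁿ is the j-th standard basis vector), the vectors λ₁,…,λ_k are pairwise distinct; (iii) for each j = 1,…,k, the elementary symmetric function e_j(b₁,…,b_k) is a series in t^p. Then each bᵢ is a series in t^p; that is, each bᵢ ∈ K⟦t^p,u,x⟧. -/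

import Mathlib

/-- `j`-th elementary symmetric function of `b 0, …, b (k-1)`:
the sum of all products of `j` of them with distinct indices (`e₀ = 1`). -/
def esym {A : Type*} [CommSemiring A] {k : ℕ} (b : Fin k → A) (j : ℕ) : A :=
  ∑ T ∈ Finset.powersetCard j Finset.univ, ∏ i ∈ T, b i

/-- The monomial `t^β u^δ x^α` in the variables `Unit ⊕ Fin s ⊕ Fin n`
(the `Unit` variable is `t`, the middle ones are `u`, the last ones are `x`). -/
noncomputable def mono (s n : ℕ) (β : ℕ) (δ : Fin s →₀ ℕ) (α : Fin n →₀ ℕ) :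
    (Unit ⊕ Fin s ⊕ Fin n) →₀ ℕ :=
  Finsupp.sumElim (Finsupp.single () β) (Finsupp.sumElim δ α)

/-- `F` is a series in `t^p`: every coefficient on a monomial `t^β u^δ x^α`
with `p ∤ β` vanishes. -/
def isSeriesInTp (K : Type*) [Field K] {s n : ℕ} (p : ℕ)
    (F : MvPowerSeries (Unit ⊕ Fin s ⊕ Fin n) K) : Prop :=
  ∀ m : (Unit ⊕ Fin s ⊕ Fin n) →₀ ℕ, ¬ p ∣ m (Sum.inl ()) →
    MvPowerSeries.coeff m F = 0

section Twist

variable {K : Type*} [Field K] {s n : ℕ}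

/-- The underlying function of the substitution `t ↦ ε t`. -/
noncomputable def twistFun (ε : K) (s n : ℕ)
    (F : MvPowerSeries (Unit ⊕ Fin s ⊕ Fin n) K) :
    MvPowerSeries (Unit ⊕ Fin s ⊕ Fin n) K :=
  fun m => ε ^ (m (Sum.inl ())) * MvPowerSeries.coeff m F

theorem coeff_twistFun (ε : K) (F : MvPowerSeries (Unit ⊕ Fin s ⊕ Fin n) K)
    (m : (Unit ⊕ Fin s ⊕ Fin n) →₀ ℕ) :
    MvPowerSeries.coeff m (twistFun ε s n F)
      = ε ^ (m (Sum.inl ())) * MvPowerSeries.coeff m F :=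
  rfl

/-- The ring endomorphism of `K[[t,u,x]]` given by `t ↦ ε t`. -/
noncomputable def twist (ε : K) (s n : ℕ) :
    MvPowerSeries (Unit ⊕ Fin s ⊕ Fin n) K →+* MvPowerSeries (Unit ⊕ Fin s ⊕ Fin n) K where
  toFun := twistFun ε s n
  map_zero' := by
    apply MvPowerSeries.ext; intro m
    rw [coeff_twistFun]; simp
  map_one' := by
    classical
    apply MvPowerSeries.ext; intro m
    rw [coeff_twistFun, MvPowerSeries.coeff_one]
    split_ifs with h
    · subst h; simp
    · simp
  map_add' F G := by
    apply MvPowerSeries.ext; intro m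
    rw [map_add, coeff_twistFun, coeff_twistFun, coeff_twistFun, map_add]
    ring
  map_mul' F G := by
    classical
    apply MvPowerSeries.ext; intro m
    rw [coeff_twistFun, MvPowerSeries.coeff_mul, MvPowerSeries.coeff_mul, Finset.mul_sum]
    refine Finset.sum_congr rfl fun q hq => ?_
    have hq' : q.1 + q.2 = m := Finset.HasAntidiagonal.mem_antidiagonal.mp hq
    rw [coeff_twistFun, coeff_twistFun, ← hq']
    simp only [Finsupp.add_apply, pow_add]
    ring

theorem coeff_twist (ε : K) (F : MvPowerSeries (Unit ⊕ Fin s ⊕ Fin n) K)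
    (m : (Unit ⊕ Fin s ⊕ Fin n) →₀ ℕ) :
    MvPowerSeries.coeff m (twist ε s n F) = ε ^ (m (Sum.inl ())) * MvPowerSeries.coeff m F :=
  rfl

theorem twist_eq_self {p : ℕ} {ε : K} (hεp : ε ^ p = 1)
    (F : MvPowerSeries (Unit ⊕ Fin s ⊕ Fin n) K) (hF : isSeriesInTp K p F) :
    twist ε s n F = F := by
  apply MvPowerSeries.ext; intro m
  rw [coeff_twist]
  by_cases h : p ∣ m (Sum.inl ())
  · obtain ⟨q, hq⟩ := h
    rw [hq, pow_mul, hεp, one_pow, one_mul]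
  · rw [hF m h, mul_zero]

end Twist

/-- Lemma 3.5 ("we can take `p = 1`"): if the elementary symmetric functions of
`b₁, …, b_k` are series in `t^p`, each `bᵢ` has zero `x`-constant term, and the
`t`-free `x`-linear parts of the `bᵢ` are pairwise distinct, then each `bᵢ` is a
series in `t^p`. -/
theorem lemma_p_eq_one
    (K : Type*) [Field K] [IsAlgClosed K] [CharZero K]
    (p : ℕ) (hp : 1 ≤ p) (ε : K) (hε : IsPrimitiveRoot ε p)
    (s k : ℕ) (hk : 2 ≤ k)
    (b : Fin k → MvPowerSeries (Unit ⊕ Fin s ⊕ Fin (k - 1)) K)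
    -- (i) zero `x`-constant term
    (hconst : ∀ (i : Fin k) (m : (Unit ⊕ Fin s ⊕ Fin (k - 1)) →₀ ℕ),
      (∀ j : Fin (k - 1), m (Sum.inr (Sum.inr j)) = 0) →
      MvPowerSeries.coeff m (b i) = 0)
    -- (ii) the `t`-free `x`-linear parts `λᵢ` are pairwise distinct
    (hdist : ∀ i i' : Fin k,
      (∀ (j : Fin (k - 1)) (δ : Fin s →₀ ℕ),
        MvPowerSeries.coeff (mono s (k - 1) 0 δ (Finsupp.single j 1)) (b i) =
          MvPowerSeries.coeff (mono s (k - 1) 0 δ (Finsupp.single j 1)) (b i')) →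
      i = i')
    -- (iii) each `e_j(b₁,…,b_k)` is a series in `t^p`
    (hesymm : ∀ j, 1 ≤ j → j ≤ k → isSeriesInTp K p (esym b j)) :
    ∀ i : Fin k, isSeriesInTp K p (b i) := by
  classical
  haveI : IsDomain (MvPowerSeries (Unit ⊕ Fin s ⊕ Fin (k - 1)) K) :=
    NoZeroDivisors.to_isDomain _
  -- Step 1: the twist fixes each elementary symmetric function for j ≤ k.
  have hesym_eq : ∀ j, j ≤ k →
      esym (fun i => twist ε s (k - 1) (b i)) j = esym b j := by
    intro j hj
    rcases Nat.eq_zero_or_pos j with rfl | hj1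
    · simp [esym]
    · have h1 : twist ε s (k - 1) (esym b j) = esym (fun i => twist ε s (k - 1) (b i)) j := by
        simp only [esym, map_sum, map_prod]
      rw [← h1]
      exact twist_eq_self hε.pow_eq_one _ (hesymm j hj1 hj)
  -- Step 2: by Vieta + roots, the multisets of the `b i` and their twists agree.
  have hesymm_mult : ∀ j, j ≤ k →
      (Finset.univ.val.map (fun i => twist ε s (k - 1) (b i))).esymm j
        = (Finset.univ.val.map b).esymm j := by
    intro j hj
    rw [Finset.esymm_map_val, Finset.esymm_map_val]
    exact hesym_eq j hj
  have hprodneg : ∀ S : Multiset (MvPowerSeries (Unit ⊕ Fin s ⊕ Fin (k - 1)) K),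
      (S.map fun a => Polynomial.X - Polynomial.C a).prod
        = ((S.map fun a => -a).map fun a => Polynomial.X + Polynomial.C a).prod := by
    intro S
    rw [Multiset.map_map]
    refine congrArg _ (Multiset.map_congr rfl fun a _ => ?_)
    simp [sub_eq_add_neg]
  have hesymm_neg : ∀ (S : Multiset (MvPowerSeries (Unit ⊕ Fin s ⊕ Fin (k - 1)) K)) (j : ℕ),
      (S.map fun a => -a).esymm j = (-1) ^ j * S.esymm j := by
    intro S j
    have h := Multiset.pow_smul_esymm (-1 : MvPowerSeries (Unit ⊕ Fin s ⊕ Fin (k - 1)) K) j S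
    simp only [smul_eq_mul, neg_one_mul] at h
    exact h.symm
  have hprod :
      ((Finset.univ.val.map (fun i => twist ε s (k - 1) (b i))).map
          fun a => Polynomial.X - Polynomial.C a).prod
        = ((Finset.univ.val.map b).map fun a => Polynomial.X - Polynomial.C a).prod := by
    rw [hprodneg, hprodneg, Multiset.prod_X_add_C_eq_sum_esymm,
      Multiset.prod_X_add_C_eq_sum_esymm]
    simp only [Multiset.card_map]
    refine Finset.sum_congr rfl fun j hj => ?_
    rw [hesymm_neg, hesymm_neg, hesymm_mult j (by
      have h := Finset.mem_range.mp hj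
      simpa using Nat.lt_succ_iff.mp (by simpa using h))]
  have hmult : (Finset.univ.val.map (fun i => twist ε s (k - 1) (b i)))
      = (Finset.univ.val.map b) := by
    have h := congrArg Polynomial.roots hprod
    rwa [Polynomial.roots_multiset_prod_X_sub_C, Polynomial.roots_multiset_prod_X_sub_C] at h
  -- Step 3: the twist fixes each `b i`.
  have hfix : ∀ i, twist ε s (k - 1) (b i) = b i := by
    intro i
    have hci : twist ε s (k - 1) (b i) ∈ Finset.univ.val.map b := by
      rw [← hmult]
      exact Multiset.mem_map_of_mem _ (Finset.mem_univ_val i)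
    obtain ⟨i', _, hi'⟩ := Multiset.mem_map.mp hci
    have hii' : i = i' := by
      refine hdist i i' fun j δ => ?_
      have hzero : (mono s (k - 1) 0 δ (Finsupp.single j 1)) (Sum.inl ()) = 0 := by
        simp [mono]
      rw [hi', coeff_twist, hzero, pow_zero, one_mul]
    rw [← hii'] at hi'
    exact hi'.symm
  intro i m hm
  have h := congrArg (MvPowerSeries.coeff m) (hfix i)
  rw [coeff_twist] at h
  have hne : ε ^ (m (Sum.inl ())) ≠ 1 := fun h1 => hm ((hε.pow_eq_one_iff_dvd _).mp h1)
  have hmul : (ε ^ (m (Sum.inl ())) - 1) * MvPowerSeries.coeff m (b i) = 0 := by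
    rw [sub_mul, one_mul, h, sub_self]
  rcases mul_eq_zero.mp hmul with h0 | h0
  · exact absurd (sub_eq_zero.mp h0) hne
  · exact h0
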